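/- (Lexell's theorem) Fix a geodesic segment AB on the unit sphere and a constant E ∈ (0, 2π). The locus of points C, on one side of the great circle through A and B, such that the spherical triangle ABC has area E, is an arc of a small circle passing through the antipodal points A* and B* of A and B. -/

import Mathlib

open scoped RealInnerProductSpace

/-- Interior angle of a spherical triangle at vertex `u`, between the sides
towards `v` and `w`. -/
noncomputable def sphAngle (u v w : EuclideanSpace ℝ (Fin 3)) : ℝ :=
  InnerProductGeometry.angle (v - ⟪u, v⟫ • u) (w - ⟪u, w⟫ • u)


set_option maxHeartbeats 1000000 in
/-- Scalar core of Lexell's theorem: from the cosine/sine data of the three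
angles of a spherical triangle, derive the half-excess relation. -/
lemma lexell_aux (α β γ E a b c p q r V : ℝ)
    (hp0 : 0 < p) (hq0 : 0 < q) (hr0 : 0 < r) (hV0 : 0 < V)
    (hp2 : p^2 = 1-a^2) (hq2 : q^2 = 1-b^2) (hr2 : r^2 = 1-c^2)
    (hV2 : V^2 = 1 - a^2 - b^2 - c^2 + 2*(a*b*c))
    (hcA : Real.cos α = (a - c*b)/(r*q)) (hsA : Real.sin α = V/(r*q))
    (hcB : Real.cos β = (b - c*a)/(r*p)) (hsB : Real.sin β = V/(r*p))
    (hcC : Real.cos γ = (c - a*b)/(q*p)) (hsC : Real.sin γ = V/(q*p))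
    (hEeq : α + β + γ - Real.pi = E) (hE0 : 0 < E) (hE2 : E < 2*Real.pi) :
    Real.cos (E/2) * V = Real.sin (E/2) * (1+a+b+c) := by
  have h1a : 0 < 1 - a^2 := hp2 ▸ pow_pos hp0 2
  have h1b : 0 < 1 - b^2 := hq2 ▸ pow_pos hq0 2
  have h1c : 0 < 1 - c^2 := hr2 ▸ pow_pos hr0 2
  have hcos1 : Real.cos (α+β+γ) * (p^2*q^2*r^2)
      = (a-c*b)*(b-c*a)*(c-a*b) - ((a-c*b)+(b-c*a)+(c-a*b))*V^2 := by
    rw [Real.cos_add, Real.cos_add, Real.sin_add, hcA, hcB, hcC, hsA, hsB, hsC]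
    field_simp
    ring
  have hsin1 : Real.sin (α+β+γ) * (p^2*q^2*r^2)
      = ((b-c*a)*(c-a*b)+(a-c*b)*(c-a*b)+(a-c*b)*(b-c*a) - V^2)*V := by
    rw [Real.sin_add, Real.sin_add, Real.cos_add, hcA, hcB, hcC, hsA, hsB, hsC]
    field_simp
    ring
  have ha1 : 0 < 1 + a := by nlinarith
  have hb1 : 0 < 1 + b := by nlinarith
  have hc1 : 0 < 1 + c := by nlinarith
  have hP0 : (0:ℝ) < 2*(1+a)*(1+b)*(1+c) := by positivity
  have hden : (0:ℝ) < p^2*q^2*r^2 := by positivity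
  have e1 : (a-c*b)*(b-c*a)*(c-a*b) - ((a-c*b)+(b-c*a)+(c-a*b))*V^2
      = (V^2 - (1+a+b+c)^2)/(2*(1+a)*(1+b)*(1+c)) * (p^2*q^2*r^2) := by
    rw [hp2, hq2, hr2, hV2]
    field_simp
    ring
  have e2 : ((b-c*a)*(c-a*b)+(a-c*b)*(c-a*b)+(a-c*b)*(b-c*a) - V^2)*V
      = (-(2*(1+a+b+c)*V)/(2*(1+a)*(1+b)*(1+c))) * (p^2*q^2*r^2) := by
    rw [hp2, hq2, hr2, hV2]
    field_simp
    ring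
  have hcosE : Real.cos E * (2*(1+a)*(1+b)*(1+c)) = (1+a+b+c)^2 - V^2 := by
    rw [← hEeq, Real.cos_sub_pi,
      mul_right_cancel₀ (ne_of_gt hden) (hcos1.trans e1)]
    field_simp
    ring
  have hsinE : Real.sin E * (2*(1+a)*(1+b)*(1+c)) = 2*(1+a+b+c)*V := by
    rw [← hEeq, Real.sin_sub_pi,
      mul_right_cancel₀ (ne_of_gt hden) (hsin1.trans e2)]
    field_simp
  set s : ℝ := Real.sin (E/2) with hsdef
  set t : ℝ := Real.cos (E/2) with htdef
  have hs0 : 0 < s := Real.sin_pos_of_pos_of_lt_pi (by linarith) (by linarith)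
  have hst : s^2 + t^2 = 1 := Real.sin_sq_add_cos_sq _
  have hcE : Real.cos E = 2*t^2 - 1 := by
    have h := Real.cos_two_mul (E/2); rw [show 2*(E/2) = E by ring] at h; rw [h]
  have hsE : Real.sin E = 2*s*t := by
    have h := Real.sin_two_mul (E/2); rw [show 2*(E/2) = E by ring] at h; rw [h]
  rw [hcE] at hcosE
  rw [hsE] at hsinE
  have hP : 2*(1+a)*(1+b)*(1+c) = (1+a+b+c)^2 + V^2 := by rw [hV2]; ring
  have hs2P : s^2 * (2*(1+a)*(1+b)*(1+c)) = V^2 := by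
    linear_combination (-(1:ℝ)/2) * hcosE + (2*(1+a)*(1+b)*(1+c)) * hst + ((1:ℝ)/2) * hP
  have hsP : s * (2*(1+a)*(1+b)*(1+c)) ≠ 0 := by positivity
  apply mul_right_cancel₀ hsP
  linear_combination (V/2)*hsinE - (1+a+b+c)*hs2P

/-- **Lexell's theorem.**  Fix non-antipodal points `A, B` on the unit sphere,
a unit normal `n` to the plane of the great circle through `A` and `B`, and a
constant `E ∈ (0, 2π)`.  Then there is a circle on the sphere (the intersection
of the sphere with the plane `⟪v, ·⟫ = d`) passing through the antipodes `-A`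
and `-B` which contains every point `C` on the `n`-side of the great circle
through `A, B` for which the spherical triangle `ABC` has area (angular excess)
equal to `E`. -/
theorem lexell (A B n : EuclideanSpace ℝ (Fin 3))
    (hA : ‖A‖ = 1) (hB : ‖B‖ = 1) (hn : ‖n‖ = 1)
    (hAB : LinearIndependent ℝ ![A, B])
    (hnA : ⟪n, A⟫ = 0) (hnB : ⟪n, B⟫ = 0)
    (E : ℝ) (hE : E ∈ Set.Ioo 0 (2 * Real.pi)) :
    ∃ (v : EuclideanSpace ℝ (Fin 3)) (d : ℝ), v ≠ 0 ∧
      ⟪v, -A⟫ = d ∧ ⟪v, -B⟫ = d ∧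
      ∀ C : EuclideanSpace ℝ (Fin 3), ‖C‖ = 1 → 0 < ⟪n, C⟫ →
        sphAngle A B C + sphAngle B A C + sphAngle C A B - Real.pi = E →
        ⟪v, C⟫ = d := by
  obtain ⟨hE0, hE2⟩ := hE
  have hA2 : ⟪A, A⟫ = (1:ℝ) := by rw [real_inner_self_eq_norm_mul_norm, hA]; norm_num
  have hB2 : ⟪B, B⟫ = (1:ℝ) := by rw [real_inner_self_eq_norm_mul_norm, hB]; norm_num
  have hn2 : ⟪n, n⟫ = (1:ℝ) := by rw [real_inner_self_eq_norm_mul_norm, hn]; norm_num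
  set c : ℝ := ⟪A, B⟫ with hcdef
  have hBA : ⟪B, A⟫ = c := (real_inner_comm B A).symm
  obtain ⟨hBne, hind⟩ := linearIndependent_fin2.mp hAB
  simp only [Matrix.cons_val_one, Matrix.head_cons, Matrix.cons_val_zero] at hBne hind
  have hBcA : B - c • A ≠ 0 := by
    intro h
    have hBeq : B = c • A := by rwa [sub_eq_zero] at h
    have hc0 : c ≠ 0 := by
      intro h0; rw [h0, zero_smul] at hBeq; exact hBne hBeq
    exact hind c⁻¹ (by rw [hBeq, smul_smul, inv_mul_cancel₀ hc0, one_smul])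
  have hApB : A + B ≠ 0 := by
    intro h
    apply hind (-1)
    rw [neg_one_smul]
    exact neg_eq_of_add_eq_zero_left h
  have h1c : 0 < 1 - c^2 := by
    have h : ‖B - c • A‖^2 = 1 - c^2 := by
      rw [norm_sub_sq_real, real_inner_smul_right, norm_smul, hB, hBA]
      simp [hA, abs_mul_abs_self]
      ring
    rw [← h]
    exact pow_pos (norm_pos_iff.mpr hBcA) 2
  set r : ℝ := Real.sqrt (1 - c^2) with hrdef
  have hr2 : r^2 = 1 - c^2 := Real.sq_sqrt h1c.le
  have hr0 : 0 < r := Real.sqrt_pos.mpr h1c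
  have hrne : r ≠ 0 := ne_of_gt hr0
  set s : ℝ := Real.sin (E/2) with hsdef
  set t : ℝ := Real.cos (E/2) with htdef
  have hs0 : 0 < s := Real.sin_pos_of_pos_of_lt_pi (by linarith) (by linarith)
  refine ⟨(t*r) • n - s • (A+B), s*(1+c), ?_, ?_, ?_, ?_⟩
  · -- v ≠ 0
    intro h
    have hip : 0 < ⟪A+B, A+B⟫ := by
      rw [real_inner_self_eq_norm_mul_norm]
      exact mul_pos (norm_pos_iff.mpr hApB) (norm_pos_iff.mpr hApB)
    have key : ⟪(t*r) • n - s • (A+B), A+B⟫ = -(s*⟪A+B, A+B⟫) := by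
      simp only [inner_sub_left, real_inner_smul_left, inner_add_left, inner_add_right,
        hnA, hnB]
      ring
    rw [h, inner_zero_left] at key
    nlinarith
  · -- passes through -A
    simp only [inner_neg_right, inner_sub_left, real_inner_smul_left, inner_add_left,
      hnA, hA2, hBA]
    ring
  · -- passes through -B
    simp only [inner_neg_right, inner_sub_left, real_inner_smul_left, inner_add_left,
      hnB, hB2, ← hcdef]
    ring
  · -- the locus condition
    intro C hC hz0 hExc
    have hCC : ⟪C, C⟫ = (1:ℝ) := by rw [real_inner_self_eq_norm_mul_norm, hC]; norm_num
    set a : ℝ := ⟪B, C⟫ with hadef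
    set b : ℝ := ⟪A, C⟫ with hbdef
    set z : ℝ := ⟪n, C⟫ with hzdef
    have hCA : ⟪C, A⟫ = b := (real_inner_comm C A).symm
    have hCB : ⟪C, B⟫ = a := (real_inner_comm C B).symm
    have hCn : ⟪C, n⟫ = z := (real_inner_comm C n).symm
    -- orthonormal basis A, B', n and Parseval
    set B' : EuclideanSpace ℝ (Fin 3) := r⁻¹ • (B - c • A) with hB'def
    have hAB' : ⟪A, B'⟫ = 0 := by
      simp [hB'def, inner_smul_right, inner_sub_right, real_inner_smul_right, hA2, hA, ← hcdef]
    have hB'B' : ⟪B', B'⟫ = 1 := by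
      simp only [hB'def, real_inner_smul_left, real_inner_smul_right, inner_sub_left,
        inner_sub_right, hA2, hB2, hBA, ← hcdef]
      field_simp
      linarith [hr2]
    have hnB' : ⟪n, B'⟫ = 0 := by
      simp [hB'def, inner_smul_right, inner_sub_right, real_inner_smul_right, hnA, hnB]
    have hon : Orthonormal ℝ ![A, B', n] := by
      rw [orthonormal_iff_ite]
      have hB'A : ⟪B', A⟫ = 0 := by rw [real_inner_comm]; exact hAB'
      have hAn : ⟪A, n⟫ = 0 := by rw [real_inner_comm]; exact hnA
      have hB'n : ⟪B', n⟫ = 0 := by rw [real_inner_comm]; exact hnB'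
      have hB'1 : ‖B'‖ = 1 := by rw [norm_eq_sqrt_real_inner, hB'B', Real.sqrt_one]
      intro i j
      fin_cases i <;> fin_cases j <;>
        simp only [Matrix.cons_val_zero, Matrix.cons_val_one, Matrix.head_cons,
          Matrix.cons_val_two, Matrix.tail_cons, Fin.mk_zero, Fin.mk_one] <;>
        norm_num [Fin.ext_iff, hA2, hB'B', hn2, hAB', hB'A, hAn, hnA, hB'n, hnB', hA, hn, hB'1]
    have hcard : Fintype.card (Fin 3) = Module.finrank ℝ (EuclideanSpace ℝ (Fin 3)) := by
      simp [finrank_euclideanSpace_fin]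
    let bas := basisOfOrthonormalOfCardEqFinrank hon hcard
    have hbas : ⇑bas = ![A, B', n] := coe_basisOfOrthonormalOfCardEqFinrank hon hcard
    let ob : OrthonormalBasis (Fin 3) ℝ (EuclideanSpace ℝ (Fin 3)) :=
      bas.toOrthonormalBasis (by rwa [hbas])
    have hob : ⇑ob = ![A, B', n] := by
      rw [show ⇑ob = ⇑bas from Module.Basis.coe_toOrthonormalBasis _ _, hbas]
    have hpar := ob.sum_inner_mul_inner C C
    rw [Fin.sum_univ_three] at hpar
    simp only [hob, Matrix.cons_val_zero, Matrix.cons_val_one, Matrix.head_cons,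
      Matrix.cons_val_two, Matrix.tail_cons] at hpar
    rw [hCC, real_inner_comm A C, real_inner_comm B' C, real_inner_comm n C] at hpar
    set β : ℝ := ⟪B', C⟫ with hβdef
    rw [← hbdef, ← hzdef] at hpar
    -- hpar : b * b + β * β + z * z = 1
    have hβ : r * β = a - c*b := by
      rw [hβdef, hB'def, real_inner_smul_left, inner_sub_left, real_inner_smul_left,
        ← hadef, ← hbdef]
      field_simp
    -- the volume V
    obtain ⟨V, hVdef⟩ : ∃ V : ℝ, V = r * z := ⟨_, rfl⟩
    have hV0 : 0 < V := hVdef ▸ mul_pos hr0 hz0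
    have hV2 : V^2 = 1 - a^2 - b^2 - c^2 + 2*(a*b*c) := by
      rw [hVdef]
      linear_combination r^2 * hpar - (r*β + (a - c*b))*hβ + (1-b^2)*hr2
    have hV2pos : 0 < V^2 := pow_pos hV0 2
    have h1b : 0 < 1 - b^2 := by
      have key : (1-c^2)*(1-b^2) = V^2 + (a-c*b)^2 := by linear_combination -hV2
      have hpos : 0 < (1-c^2)*(1-b^2) := by
        rw [key]; exact add_pos_of_pos_of_nonneg hV2pos (sq_nonneg _)
      rcases mul_pos_iff.mp hpos with ⟨_, h⟩ | ⟨h, _⟩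
      · exact h
      · linarith
    have h1a : 0 < 1 - a^2 := by
      have key : (1-c^2)*(1-a^2) = V^2 + (b-c*a)^2 := by linear_combination -hV2
      have hpos : 0 < (1-c^2)*(1-a^2) := by
        rw [key]; exact add_pos_of_pos_of_nonneg hV2pos (sq_nonneg _)
      rcases mul_pos_iff.mp hpos with ⟨_, h⟩ | ⟨h, _⟩
      · exact h
      · linarith
    set p : ℝ := Real.sqrt (1 - a^2) with hpdef
    set q : ℝ := Real.sqrt (1 - b^2) with hqdef
    have hp2 : p^2 = 1 - a^2 := Real.sq_sqrt h1a.le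
    have hq2 : q^2 = 1 - b^2 := Real.sq_sqrt h1b.le
    have hp0 : 0 < p := Real.sqrt_pos.mpr h1a
    have hq0 : 0 < q := Real.sqrt_pos.mpr h1b
    -- inner products and norms of the tangent vectors
    have nBA : ‖B - c • A‖ = r := by
      rw [norm_eq_sqrt_real_inner, hrdef]
      congr 1
      simp only [inner_sub_left, inner_sub_right, real_inner_smul_left, real_inner_smul_right,
        hA2, hB2, hBA, ← hcdef]
      ring
    have nAB : ‖A - c • B‖ = r := by
      rw [norm_eq_sqrt_real_inner, hrdef]
      congr 1
      simp only [inner_sub_left, inner_sub_right, real_inner_smul_left, real_inner_smul_right,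
        hA2, hB2, hBA, ← hcdef]
      ring
    have nCA : ‖C - b • A‖ = q := by
      rw [norm_eq_sqrt_real_inner, hqdef]
      congr 1
      simp only [inner_sub_left, inner_sub_right, real_inner_smul_left, real_inner_smul_right,
        hA2, hCC, hCA, ← hbdef]
      ring
    have nCB : ‖C - a • B‖ = p := by
      rw [norm_eq_sqrt_real_inner, hpdef]
      congr 1
      simp only [inner_sub_left, inner_sub_right, real_inner_smul_left, real_inner_smul_right,
        hB2, hCC, hCB, ← hadef]
      ring
    have nAC : ‖A - b • C‖ = q := by
      rw [norm_eq_sqrt_real_inner, hqdef]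
      congr 1
      simp only [inner_sub_left, inner_sub_right, real_inner_smul_left, real_inner_smul_right,
        hA2, hCC, hCA, ← hbdef]
      ring
    have nBC : ‖B - a • C‖ = p := by
      rw [norm_eq_sqrt_real_inner, hpdef]
      congr 1
      simp only [inner_sub_left, inner_sub_right, real_inner_smul_left, real_inner_smul_right,
        hB2, hCC, hCB, ← hadef]
      ring
    have iA1 : ⟪B - c • A, B - c • A⟫ = 1 - c^2 := by
      simp only [inner_sub_left, inner_sub_right, real_inner_smul_left, real_inner_smul_right,
        hA2, hB2, hBA, ← hcdef]
      ring
    have iA2 : ⟪C - b • A, C - b • A⟫ = 1 - b^2 := by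
      simp only [inner_sub_left, inner_sub_right, real_inner_smul_left, real_inner_smul_right,
        hA2, hCC, hCA, ← hbdef]
      ring
    have iA3 : ⟪B - c • A, C - b • A⟫ = a - c*b := by
      simp only [inner_sub_left, inner_sub_right, real_inner_smul_left, real_inner_smul_right,
        hA2, hBA, hCA, ← hadef, ← hbdef, ← hcdef]
      ring
    have iB1 : ⟪A - c • B, A - c • B⟫ = 1 - c^2 := by
      simp only [inner_sub_left, inner_sub_right, real_inner_smul_left, real_inner_smul_right,
        hA2, hB2, hBA, ← hcdef]
      ring
    have iB2 : ⟪C - a • B, C - a • B⟫ = 1 - a^2 := by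
      simp only [inner_sub_left, inner_sub_right, real_inner_smul_left, real_inner_smul_right,
        hB2, hCC, hCB, ← hadef]
      ring
    have iB3 : ⟪A - c • B, C - a • B⟫ = b - c*a := by
      simp only [inner_sub_left, inner_sub_right, real_inner_smul_left, real_inner_smul_right,
        hB2, hBA, hCB, ← hadef, ← hbdef, ← hcdef]
      ring
    have iC1 : ⟪A - b • C, A - b • C⟫ = 1 - b^2 := by
      simp only [inner_sub_left, inner_sub_right, real_inner_smul_left, real_inner_smul_right,
        hA2, hCC, hCA, ← hbdef]
      ring
    have iC2 : ⟪B - a • C, B - a • C⟫ = 1 - a^2 := by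
      simp only [inner_sub_left, inner_sub_right, real_inner_smul_left, real_inner_smul_right,
        hB2, hCC, hCB, ← hadef]
      ring
    have iC3 : ⟪A - b • C, B - a • C⟫ = c - a*b := by
      simp only [inner_sub_left, inner_sub_right, real_inner_smul_left, real_inner_smul_right,
        hCC, hCA, hCB, ← hadef, ← hbdef, ← hcdef]
      ring
    -- the three angles
    have hαdef : sphAngle A B C = InnerProductGeometry.angle (B - c • A) (C - b • A) := by
      rw [sphAngle, ← hcdef, ← hbdef]
    have hβAdef : sphAngle B A C = InnerProductGeometry.angle (A - c • B) (C - a • B) := by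
      rw [sphAngle, hBA, ← hadef]
    have hγdef : sphAngle C A B = InnerProductGeometry.angle (A - b • C) (B - a • C) := by
      rw [sphAngle, hCA, hCB]
    have hcA : Real.cos (sphAngle A B C) = (a - c*b)/(r*q) := by
      rw [hαdef, InnerProductGeometry.cos_angle, iA3, nBA, nCA]
    have hcB : Real.cos (sphAngle B A C) = (b - c*a)/(r*p) := by
      rw [hβAdef, InnerProductGeometry.cos_angle, iB3, nAB, nCB]
    have hcC : Real.cos (sphAngle C A B) = (c - a*b)/(q*p) := by
      rw [hγdef, InnerProductGeometry.cos_angle, iC3, nAC, nBC]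
    have hsA : Real.sin (sphAngle A B C) = V/(r*q) := by
      have h := InnerProductGeometry.sin_angle_mul_norm_mul_norm (B - c • A) (C - b • A)
      rw [iA1, iA2, iA3, nBA, nCA,
        show (1-c^2)*(1-b^2) - (a-c*b)*(a-c*b) = V^2 by linear_combination -hV2,
        Real.sqrt_sq hV0.le] at h
      rw [hαdef, eq_div_iff (by positivity)]
      exact h
    have hsB : Real.sin (sphAngle B A C) = V/(r*p) := by
      have h := InnerProductGeometry.sin_angle_mul_norm_mul_norm (A - c • B) (C - a • B)
      rw [iB1, iB2, iB3, nAB, nCB,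
        show (1-c^2)*(1-a^2) - (b-c*a)*(b-c*a) = V^2 by linear_combination -hV2,
        Real.sqrt_sq hV0.le] at h
      rw [hβAdef, eq_div_iff (by positivity)]
      exact h
    have hsC : Real.sin (sphAngle C A B) = V/(q*p) := by
      have h := InnerProductGeometry.sin_angle_mul_norm_mul_norm (A - b • C) (B - a • C)
      rw [iC1, iC2, iC3, nAC, nBC,
        show (1-b^2)*(1-a^2) - (c-a*b)*(c-a*b) = V^2 by linear_combination -hV2,
        Real.sqrt_sq hV0.le] at h
      rw [hγdef, eq_div_iff (by positivity)]
      exact h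
    -- apply the scalar lemma
    have key := lexell_aux (sphAngle A B C) (sphAngle B A C) (sphAngle C A B) E a b c p q r V
      hp0 hq0 hr0 hV0 hp2 hq2 hr2 hV2 hcA hsA hcB hsB hcC hsC hExc hE0 hE2
    -- conclude
    have hvC : ⟪(t*r) • n - s • (A+B), C⟫ = t*r*z - s*(b + a) := by
      simp only [inner_sub_left, real_inner_smul_left, inner_add_left,
        ← hadef, ← hbdef, ← hzdef]
      try ring
    rw [hvC]
    rw [hVdef] at key
    rw [← hsdef, ← htdef] at key
    linear_combination key
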